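/- arXiv:1011.2750 — 3 statements merged into one kernel-verified Lean document; each statement's English description precedes it below -/
import Mathlib

section
/- Let η : ℝ → ℝ be convex and continuously differentiable, let F : ℝ → ℝ^k be continuously differentiable, fix c ∈ ℝ, and define Q : ℝ → ℝ^k componentwise by Q_j(u) = ∫_c^u η'(r)·F_j'(r) dr. Then for all a, b ∈ ℝ and every vector n ∈ ℝ^k: |(Q(b) − Q(a) − (1/2)·(F(b) − F(a))·(η'(b) + η'(a))) · n| ≤ (1/2)·(∫_0^1 |F'(a + s·(b − a)) · n| ds)·(η'(b) − η'(a))·(b − a). -/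
open intervalIntegral

/-- Entropy-flux estimate: for the entropy flux `Q_j(u) = ∫_c^u η'(r) F_j'(r) dr`
associated with a convex `C¹` entropy `η` and a `C¹` flux `F : ℝ → ℝ^k`, and for all
traces `a = v⁻`, `b = v⁺` and every face normal `n ∈ ℝ^k`,
`|(Q(b) − Q(a) − ½(F(b) − F(a))(η'(b) + η'(a))) · n|
   ≤ ½ (∫_0^1 |F'(a + s(b−a)) · n| ds) (η'(b) − η'(a)) (b − a)`. -/
theorem entropy_flux_abs_bound {k : ℕ} (η : ℝ → ℝ)
    (hconv : ConvexOn ℝ Set.univ η) (hη : ContDiff ℝ 1 η)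
    (F : ℝ → Fin k → ℝ) (hF : ∀ j, ContDiff ℝ 1 fun u => F u j)
    (c : ℝ) (Q : ℝ → Fin k → ℝ)
    (hQ : ∀ u j, Q u j = ∫ r in c..u, deriv η r * deriv (fun x => F x j) r)
    (a b : ℝ) (n : Fin k → ℝ) :
    |∑ j, (Q b j - Q a j - (1 / 2) * (F b j - F a j) * (deriv η b + deriv η a)) * n j|
      ≤ (1 / 2) * (∫ s in (0:ℝ)..1, |∑ j, deriv (fun x => F x j) (a + s * (b - a)) * n j|) *
          ((deriv η b - deriv η a) * (b - a)) := by
  by_cases hab : a = b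
  · subst hab; simp
  have hd : b - a ≠ 0 := sub_ne_zero.mpr (Ne.symm hab)
  have hηc : Continuous (deriv η) := hη.continuous_deriv le_rfl
  have hηd : Differentiable ℝ η := hη.differentiable one_ne_zero
  have hmono : Monotone (deriv η) := fun x y hxy =>
    hconv.monotoneOn_deriv (fun z _ => hηd z) (Set.mem_univ x) (Set.mem_univ y) hxy
  have hFc : ∀ j, Continuous (deriv fun x => F x j) := fun j => (hF j).continuous_deriv le_rfl
  have hFd : ∀ j, Differentiable ℝ fun x => F x j := fun j => (hF j).differentiable one_ne_zero
  set m : ℝ := (deriv η b + deriv η a) / 2 with hm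
  set G : ℝ → ℝ := fun r => ∑ j, deriv (fun x => F x j) r * n j with hGdef
  have hGc : Continuous G := continuous_finset_sum _ fun j _ => (hFc j).mul continuous_const
  have haff : Continuous fun s : ℝ => a + s * (b - a) := by continuity
  -- Step 1: rewrite the sum as a single interval integral
  have hQdiff : ∀ j, Q b j - Q a j = ∫ r in a..b, deriv η r * deriv (fun x => F x j) r := by
    intro j
    have h1 : IntervalIntegrable (fun r => deriv η r * deriv (fun x => F x j) r) MeasureTheory.volume c a :=
      (hηc.mul (hFc j)).intervalIntegrable _ _
    have h2 : IntervalIntegrable (fun r => deriv η r * deriv (fun x => F x j) r) MeasureTheory.volume a b :=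
      (hηc.mul (hFc j)).intervalIntegrable _ _
    rw [hQ, hQ, ← intervalIntegral.integral_add_adjacent_intervals h1 h2]
    ring
  have hFdiff : ∀ j, F b j - F a j = ∫ r in a..b, deriv (fun x => F x j) r := fun j =>
    (intervalIntegral.integral_deriv_eq_sub (fun x _ => (hFd j).differentiableAt)
      ((hFc j).intervalIntegrable _ _)).symm
  have key : ∑ j, (Q b j - Q a j - (1 / 2) * (F b j - F a j) * (deriv η b + deriv η a)) * n j
      = ∫ r in a..b, (deriv η r - m) * G r := by
    have hterm : ∀ j : Fin k,
        (Q b j - Q a j - (1 / 2) * (F b j - F a j) * (deriv η b + deriv η a)) * n j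
        = ∫ r in a..b, (deriv η r - m) * (deriv (fun x => F x j) r * n j) := by
      intro j
      rw [hQdiff j, hFdiff j]
      have : (fun r => (deriv η r - m) * (deriv (fun x => F x j) r * n j))
          = fun r => (deriv η r * deriv (fun x => F x j) r) * n j
              - (m * n j) * deriv (fun x => F x j) r := by
        funext r; ring
      rw [this, intervalIntegral.integral_sub
          (f := fun r => (deriv η r * deriv (fun x => F x j) r) * n j)
          (g := fun r => (m * n j) * deriv (fun x => F x j) r)
          (((hηc.mul (hFc j)).mul continuous_const).intervalIntegrable _ _)
          ((continuous_const.mul (hFc j)).intervalIntegrable _ _),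
        intervalIntegral.integral_mul_const, intervalIntegral.integral_const_mul]
      rw [hm]; ring
    rw [Finset.sum_congr rfl fun j _ => hterm j,
      ← intervalIntegral.integral_finset_sum
        (f := fun j r => (deriv η r - m) * (deriv (fun x => F x j) r * n j)) fun j _ =>
        (((hηc.sub continuous_const).mul ((hFc j).mul continuous_const)).intervalIntegrable _ _)]
    congr 1
    funext r
    rw [hGdef, Finset.mul_sum]
  -- Step 2: change of variables r = a + s (b - a)
  have hsubst : (∫ r in a..b, (deriv η r - m) * G r)
      = (b - a) * ∫ s in (0:ℝ)..1, (deriv η (a + s * (b - a)) - m) * G (a + s * (b - a)) := by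
    have h := intervalIntegral.smul_integral_comp_add_mul (a := 0) (b := 1)
      (fun r => (deriv η r - m) * G r) (b - a) a
    simp only [mul_zero, add_zero, mul_one, smul_eq_mul] at h
    have hcm : ∀ s : ℝ, a + (b - a) * s = a + s * (b - a) := fun s => by ring
    rw [show a + (b - a) = b from by ring] at h
    rw [← h]
    simp only [hcm]
  -- pointwise bound on the entropy factor
  have hmem : ∀ s ∈ Set.Icc (0:ℝ) 1, a + s * (b - a) ∈ Set.uIcc a b := by
    intro s hs
    rcases le_total a b with h | h
    · rw [Set.uIcc_of_le h]
      constructor <;> nlinarith [hs.1, hs.2]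
    · rw [Set.uIcc_of_ge h]
      constructor <;> nlinarith [hs.1, hs.2]
  set D : ℝ := |deriv η b - deriv η a| / 2 with hD
  have hpt : ∀ s ∈ Set.Icc (0:ℝ) 1,
      |(deriv η (a + s * (b - a)) - m) * G (a + s * (b - a))|
        ≤ D * |G (a + s * (b - a))| := by
    intro s hs
    rw [abs_mul]
    refine mul_le_mul_of_nonneg_right ?_ (abs_nonneg _)
    have hr := hmem s hs
    rcases le_total a b with h | h
    · rw [Set.uIcc_of_le h] at hr
      have h1 := hmono hr.1
      have h2 := hmono hr.2
      have hΔ : deriv η a ≤ deriv η b := hmono h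
      rw [hD, abs_of_nonneg (by linarith : (0:ℝ) ≤ deriv η b - deriv η a), hm, abs_le]
      constructor <;> linarith
    · rw [Set.uIcc_of_ge h] at hr
      have h1 := hmono hr.1
      have h2 := hmono hr.2
      have hΔ : deriv η b ≤ deriv η a := hmono h
      rw [hD, abs_of_nonpos (by linarith : deriv η b - deriv η a ≤ 0), hm, abs_le]
      constructor <;> linarith
  -- integrability facts
  have hgc : Continuous fun s : ℝ => (deriv η (a + s * (b - a)) - m) * G (a + s * (b - a)) :=
    ((hηc.comp haff).sub continuous_const).mul (hGc.comp haff)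
  have hint1 : IntervalIntegrable
      (fun s : ℝ => |(deriv η (a + s * (b - a)) - m) * G (a + s * (b - a))|)
      MeasureTheory.volume 0 1 := hgc.abs.intervalIntegrable _ _
  have hint2 : IntervalIntegrable (fun s : ℝ => D * |G (a + s * (b - a))|)
      MeasureTheory.volume 0 1 :=
    (continuous_const.mul (hGc.comp haff).abs).intervalIntegrable _ _
  -- main estimate
  have hImono : |∫ s in (0:ℝ)..1, (deriv η (a + s * (b - a)) - m) * G (a + s * (b - a))|
      ≤ D * ∫ s in (0:ℝ)..1, |G (a + s * (b - a))| := by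
    calc |∫ s in (0:ℝ)..1, (deriv η (a + s * (b - a)) - m) * G (a + s * (b - a))|
        ≤ ∫ s in (0:ℝ)..1, |(deriv η (a + s * (b - a)) - m) * G (a + s * (b - a))| :=
          intervalIntegral.abs_integral_le_integral_abs zero_le_one
      _ ≤ ∫ s in (0:ℝ)..1, D * |G (a + s * (b - a))| :=
          intervalIntegral.integral_mono_on zero_le_one hint1 hint2 hpt
      _ = D * ∫ s in (0:ℝ)..1, |G (a + s * (b - a))| :=
          intervalIntegral.integral_const_mul _ _
  have hGeq : ∀ s : ℝ, (∑ j, deriv (fun x => F x j) (a + s * (b - a)) * n j)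
      = G (a + s * (b - a)) := fun s => rfl
  have habs : |b - a| * |deriv η b - deriv η a| = (deriv η b - deriv η a) * (b - a) := by
    rcases le_total a b with h | h
    · have hΔ : deriv η a ≤ deriv η b := hmono h
      rw [abs_of_nonneg (by linarith : (0:ℝ) ≤ b - a),
        abs_of_nonneg (by linarith : (0:ℝ) ≤ deriv η b - deriv η a)]
      ring
    · have hΔ : deriv η b ≤ deriv η a := hmono h
      rw [abs_of_nonpos (by linarith : b - a ≤ 0),
        abs_of_nonpos (by linarith : deriv η b - deriv η a ≤ 0)]
      ring
  have hGint_nonneg : (0:ℝ) ≤ ∫ s in (0:ℝ)..1, |G (a + s * (b - a))| :=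
    intervalIntegral.integral_nonneg zero_le_one fun s _ => abs_nonneg _
  calc |∑ j, (Q b j - Q a j - (1 / 2) * (F b j - F a j) * (deriv η b + deriv η a)) * n j|
      = |b - a| * |∫ s in (0:ℝ)..1, (deriv η (a + s * (b - a)) - m) * G (a + s * (b - a))| := by
        rw [key, hsubst, abs_mul]
    _ ≤ |b - a| * (D * ∫ s in (0:ℝ)..1, |G (a + s * (b - a))|) :=
        mul_le_mul_of_nonneg_left hImono (abs_nonneg _)
    _ = (1 / 2) * (∫ s in (0:ℝ)..1, |G (a + s * (b - a))|) *
          ((deriv η b - deriv η a) * (b - a)) := by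
        rw [hD, ← habs]; ring
    _ = (1 / 2) * (∫ s in (0:ℝ)..1, |∑ j, deriv (fun x => F x j) (a + s * (b - a)) * n j|) *
          ((deriv η b - deriv η a) * (b - a)) := by
        simp only [hGeq]
end

section
/- Let η : ℝ → ℝ be convex and continuously differentiable, let F : ℝ → ℝ^k be continuously differentiable, fix c ∈ ℝ, and define Q : ℝ → ℝ^k componentwise by Q_j(u) = ∫_c^u η'(r)·F_j'(r) dr. Let a, b ∈ ℝ, n ∈ ℝ^k, and let C ∈ ℝ satisfy C ≥ (1/2)·∫_0^1 |F'(a + ξ·(b − a)) · n| dξ. Then (Q(b) − Q(a) − (1/2)·(F(b) − F(a))·(η'(b) + η'(a))) · n + C·(η'(b) − η'(a))·(b − a) ≥ 0. -/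
open intervalIntegral

/-- Nonnegativity of the combined face terms (`E₂ + E₃`, resp. `E₄ + E₅`) of the
DG(p)-method: for the entropy flux `Q_j(u) = ∫_c^u η'(r) F_j'(r) dr` associated with
a convex `C¹` entropy `η` and a `C¹` flux `F : ℝ → ℝ^k`, traces `a = v⁻`, `b = v⁺`,
a face normal `n`, and a stabilization constant `C ≥ ½ ∫_0^1 |F'(a + ξ(b−a)) · n| dξ`,
`(Q(b) − Q(a) − ½(F(b) − F(a))(η'(b) + η'(a))) · n + C (η'(b) − η'(a)) (b − a) ≥ 0`. -/
theorem entropy_face_terms_nonneg {k : ℕ} (η : ℝ → ℝ)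
    (hconv : ConvexOn ℝ Set.univ η) (hη : ContDiff ℝ 1 η)
    (F : ℝ → Fin k → ℝ) (hF : ∀ j, ContDiff ℝ 1 fun u => F u j)
    (c : ℝ) (Q : ℝ → Fin k → ℝ)
    (hQ : ∀ u j, Q u j = ∫ r in c..u, deriv η r * deriv (fun x => F x j) r)
    (a b : ℝ) (n : Fin k → ℝ) (C : ℝ)
    (hC : (1 / 2) * (∫ ξ in (0:ℝ)..1, |∑ j, deriv (fun x => F x j) (a + ξ * (b - a)) * n j|) ≤ C) :
    0 ≤ (∑ j, (Q b j - Q a j - (1 / 2) * (F b j - F a j) * (deriv η b + deriv η a)) * n j)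
          + C * ((deriv η b - deriv η a) * (b - a)) := by
  set φ := deriv η with hφdef
  have hφc : Continuous φ := hη.continuous_deriv le_rfl
  have hφmono : Monotone φ := by
    have := hconv.monotoneOn_deriv (fun x _ => (hη.differentiable one_ne_zero).differentiableAt)
    exact monotoneOn_univ.mp this
  have hFd : ∀ j, Continuous (deriv fun x => F x j) :=
    fun j => (hF j).continuous_deriv le_rfl
  set g : ℝ → ℝ := fun u => ∑ j, deriv (fun x => F x j) u * n j with hgdef
  have hgc : Continuous g := by
    apply continuous_finset_sum
    intro j _
    exact (hFd j).mul continuous_const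
  set Δ := b - a with hΔdef
  set m := (1 / 2) * (φ b + φ a) with hmdef
  -- Step 1: the sum equals ∫_a^b (φ r - m) * g r
  have hsum : (∑ j, (Q b j - Q a j - (1 / 2) * (F b j - F a j) * (φ b + φ a)) * n j)
      = ∫ r in a..b, (φ r - m) * g r := by
    have hterm : ∀ j, (Q b j - Q a j - (1 / 2) * (F b j - F a j) * (φ b + φ a)) * n j
        = ∫ r in a..b, (φ r - m) * deriv (fun x => F x j) r * n j := by
      intro j
      have hint : ∀ u v : ℝ, IntervalIntegrable
          (fun r => φ r * deriv (fun x => F x j) r) MeasureTheory.volume u v :=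
        fun u v => ((hφc.mul (hFd j))).intervalIntegrable u v
      have hQd : Q b j - Q a j = ∫ r in a..b, φ r * deriv (fun x => F x j) r := by
        rw [hQ b j, hQ a j]
        exact integral_interval_sub_left (hint c b) (hint c a)
      have hFtc : F b j - F a j = ∫ r in a..b, deriv (fun x => F x j) r := by
        rw [intervalIntegral.integral_deriv_eq_sub
          (fun x _ => ((hF j).differentiable one_ne_zero).differentiableAt)
          ((hFd j).intervalIntegrable a b)]
      rw [hQd, hFtc]
      have hrhs : (∫ r in a..b, (φ r - m) * deriv (fun x => F x j) r * n j)
          = (∫ r in a..b, φ r * deriv (fun x => F x j) r) * n j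
            - (m * n j) * ∫ r in a..b, deriv (fun x => F x j) r := by
        rw [← intervalIntegral.integral_mul_const, ← intervalIntegral.integral_const_mul,
          ← intervalIntegral.integral_sub
            (f := fun r => φ r * deriv (fun x => F x j) r * n j)
            (g := fun r => m * n j * deriv (fun x => F x j) r)
            (((hφc.mul (hFd j)).mul continuous_const).intervalIntegrable a b)
            ((continuous_const.mul (hFd j)).intervalIntegrable a b)]
        congr 1
        ext r
        ring
      rw [hrhs, hmdef]
      ring
    rw [Finset.sum_congr rfl (fun j _ => hterm j)]
    rw [← intervalIntegral.integral_finset_sum]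
    · congr 1
      ext r
      rw [hgdef]
      simp only [Finset.mul_sum]
      exact Finset.sum_congr rfl fun j _ => by ring
    · intro j _
      exact (((hφc.sub continuous_const).mul (hFd j)).mul continuous_const).intervalIntegrable a b
  -- Step 2: substitution to [0,1]
  have hsub : ∀ h : ℝ → ℝ, (∫ r in a..b, h r) = Δ * ∫ ξ in (0:ℝ)..1, h (a + Δ * ξ) := by
    intro h
    have := intervalIntegral.smul_integral_comp_add_mul h Δ a (a := 0) (b := 1)
    simp only [mul_zero, add_zero, mul_one, smul_eq_mul] at this
    rw [this, hΔdef]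
    ring_nf
  set J := ∫ ξ in (0:ℝ)..1, |g (a + ξ * Δ)| with hJdef
  replace hC : 1 / 2 * J ≤ C := hC
  set I₀ := ∫ ξ in (0:ℝ)..1, (φ (a + ξ * Δ) - m) * g (a + ξ * Δ) with hI₀def
  have hIeq : (∫ r in a..b, (φ r - m) * g r) = Δ * I₀ := by
    rw [hsub (fun r => (φ r - m) * g r), hI₀def]
    congr 1
    congr 1
    ext ξ
    rw [mul_comm Δ ξ]
  -- Step 3: pointwise bound
  set D := |φ b - φ a| with hDdef
  have hbound : ∀ ξ ∈ Set.Icc (0:ℝ) 1, |φ (a + ξ * Δ) - m| ≤ D / 2 := by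
    intro ξ hξ
    have h1 : min a b ≤ a + ξ * Δ := by
      rcases le_total a b with hab | hab
      · rw [min_eq_left hab]; nlinarith [hξ.1, hξ.2]
      · rw [min_eq_right hab]; nlinarith [hξ.1, hξ.2]
    have h2 : a + ξ * Δ ≤ max a b := by
      rcases le_total a b with hab | hab
      · rw [max_eq_right hab]; nlinarith [hξ.1, hξ.2]
      · rw [max_eq_left hab]; nlinarith [hξ.1, hξ.2]
    rcases le_total a b with hab | hab
    · have ha' : φ a ≤ φ (a + ξ * Δ) := hφmono (by rw [min_eq_left hab] at h1; exact h1)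
      have hb' : φ (a + ξ * Δ) ≤ φ b := hφmono (by rw [max_eq_right hab] at h2; exact h2)
      have hD : D = φ b - φ a := abs_of_nonneg (by linarith [hφmono hab])
      rw [abs_le]; constructor <;> [skip; skip] <;> rw [hmdef, hD] <;> linarith
    · have hb' : φ b ≤ φ (a + ξ * Δ) := hφmono (by rw [min_eq_right hab] at h1; exact h1)
      have ha' : φ (a + ξ * Δ) ≤ φ a := hφmono (by rw [max_eq_left hab] at h2; exact h2)
      have hD : D = φ a - φ b := abs_of_nonpos (by linarith [hφmono hab]) |>.trans (by ring)
      rw [abs_le]; constructor <;> rw [hmdef, hD] <;> linarith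
  -- Step 4: |I₀| ≤ (D/2) * J
  have hI₀bound : |I₀| ≤ D / 2 * J := by
    have h1 : |I₀| ≤ ∫ ξ in (0:ℝ)..1, |(φ (a + ξ * Δ) - m) * g (a + ξ * Δ)| := by
      have := intervalIntegral.norm_integral_le_integral_norm
        (f := fun ξ => (φ (a + ξ * Δ) - m) * g (a + ξ * Δ)) (μ := MeasureTheory.volume)
        (zero_le_one)
      simp only [Real.norm_eq_abs] at this
      exact this
    have hcont1 : Continuous fun ξ : ℝ => (φ (a + ξ * Δ) - m) * g (a + ξ * Δ) := by
      have haff : Continuous fun ξ : ℝ => a + ξ * Δ :=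
        continuous_const.add (continuous_id.mul continuous_const)
      exact ((hφc.comp haff).sub continuous_const).mul (hgc.comp haff)
    have hcont2 : Continuous fun ξ : ℝ => |g (a + ξ * Δ)| := by
      have haff : Continuous fun ξ : ℝ => a + ξ * Δ :=
        continuous_const.add (continuous_id.mul continuous_const)
      exact (hgc.comp haff).abs
    have h2 : (∫ ξ in (0:ℝ)..1, |(φ (a + ξ * Δ) - m) * g (a + ξ * Δ)|)
        ≤ ∫ ξ in (0:ℝ)..1, D / 2 * |g (a + ξ * Δ)| := by
      apply intervalIntegral.integral_mono_on zero_le_one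
        (hcont1.abs.intervalIntegrable 0 1)
        ((continuous_const.mul hcont2).intervalIntegrable 0 1)
      intro ξ hξ
      rw [abs_mul]
      exact mul_le_mul_of_nonneg_right (hbound ξ hξ) (abs_nonneg _)
    rw [intervalIntegral.integral_const_mul] at h2
    exact h1.trans h2
  -- Step 5: sign fact
  have hsign : (φ b - φ a) * Δ = D * |Δ| := by
    rw [hDdef, ← abs_mul]
    rcases le_total a b with hab | hab
    · exact (abs_of_nonneg (mul_nonneg (by linarith [hφmono hab]) (by rw [hΔdef]; linarith))).symm
    · exact (abs_of_nonneg (by nlinarith [hφmono hab, hΔdef])).symm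
  -- Final arithmetic
  have hJnonneg : 0 ≤ J := by
    rw [hJdef]
    apply intervalIntegral.integral_nonneg zero_le_one
    intro ξ _; exact abs_nonneg _
  have hDnonneg : 0 ≤ D := hDdef ▸ abs_nonneg _
  rw [hsum, hIeq, hsign]
  clear_value φ g Δ m J I₀ D
  clear hsum hIeq hsign hsub hbound hQ hgdef hΔdef hmdef hJdef hI₀def hDdef
  have h3 : Δ * I₀ ≥ -(|Δ| * (D / 2 * J)) := by
    have h31 := neg_abs_le (Δ * I₀)
    rw [abs_mul] at h31
    have h32 : |Δ| * |I₀| ≤ |Δ| * (D / 2 * J) :=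
      mul_le_mul_of_nonneg_left hI₀bound (abs_nonneg Δ)
    linarith
  have h4 : (1 / 2 * J) * (D * |Δ|) ≤ C * (D * |Δ|) :=
    mul_le_mul_of_nonneg_right hC (mul_nonneg hDnonneg (abs_nonneg Δ))
  have h5 : |Δ| * (D / 2 * J) = (1 / 2 * J) * (D * |Δ|) := by ring
  linarith
end

section
/- Let q ≥ 2 be an even integer. Then for all a, g ∈ ℝ: 3·|a − g|·|g|^(q−1) ≤ (a − g)·(a^(q−1) − g^(q−1)) + (q − 1)·q^(−q/(q−1))·3^(q/(q−1))·2^((q−2)/(q−1))·g^q. -/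
open Real

/-- Superadditivity-based bound for `0 ≤ g ≤ a`. -/
lemma aux_sub_pow_nonneg {p : ℕ} (hp : p ≠ 0) {a g : ℝ} (hg : 0 ≤ g) (h : g ≤ a) :
    (a - g) ^ p ≤ a ^ p - g ^ p := by
  have h1 := pow_add_pow_le hg (sub_nonneg.2 h) hp
  rw [add_sub_cancel] at h1
  linarith

/-- For odd `p` and `g ≤ a`, `(a-g)^p ≤ 2^(p-1) (a^p - g^p)`. -/
lemma aux_sub_pow {p : ℕ} (hp : Odd p) {a g : ℝ} (h : g ≤ a) :
    (a - g) ^ p ≤ 2 ^ (p - 1) * (a ^ p - g ^ p) := by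
  have hp0 : p ≠ 0 := hp.pos.ne'
  have h2 : (1 : ℝ) ≤ 2 ^ (p - 1) := one_le_pow₀ one_le_two
  have hxnn : (0 : ℝ) ≤ (a - g) ^ p := pow_nonneg (sub_nonneg.2 h) p
  rcases le_or_gt 0 g with hg | hg
  · have h1 := aux_sub_pow_nonneg hp0 hg h
    nlinarith
  rcases le_or_gt a 0 with ha | ha
  · have h1 := aux_sub_pow_nonneg hp0 (neg_nonneg.2 ha) (neg_le_neg h)
    rw [hp.neg_pow, hp.neg_pow] at h1
    have h1' : (a - g) ^ p ≤ a ^ p - g ^ p := by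
      have : (-g - -a : ℝ) = a - g := by ring
      rw [this] at h1; linarith
    nlinarith
  · have h1 := add_pow_le ha.le (neg_nonneg.2 hg.le) p
    rw [hp.neg_pow] at h1
    have : (a + -g : ℝ) = a - g := by ring
    rw [this] at h1
    linarith

/-- For even `q ≥ 2`: `|a-g|^q ≤ 2^(q-2) (a-g)(a^(q-1)-g^(q-1))`. -/
lemma aux_abs {q : ℕ} (hq : 2 ≤ q) (hqe : Even q) (a g : ℝ) :
    |a - g| ^ q ≤ 2 ^ (q - 2) * ((a - g) * (a ^ (q - 1) - g ^ (q - 1))) := by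
  have hq1 : 1 ≤ q := le_trans one_le_two hq
  have hp : Odd (q - 1) := Nat.Even.sub_odd hq1 hqe odd_one
  have hsub : q - 1 - 1 = q - 2 := by omega
  have key : ∀ a g : ℝ, g ≤ a →
      |a - g| ^ q ≤ 2 ^ (q - 2) * ((a - g) * (a ^ (q - 1) - g ^ (q - 1))) := by
    intro a g h
    have hx : (0 : ℝ) ≤ a - g := sub_nonneg.2 h
    have h2 := aux_sub_pow hp h
    rw [hsub] at h2
    have hpow : |a - g| ^ q = (a - g) ^ (q - 1) * (a - g) := by
      rw [abs_of_nonneg hx, ← pow_succ]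
      congr 1
      omega
    rw [hpow]
    nlinarith [mul_le_mul_of_nonneg_right h2 hx]
  rcases le_total g a with h | h
  · exact key a g h
  · have := key g a h
    have e1 : (g - a) * (g ^ (q - 1) - a ^ (q - 1)) =
        (a - g) * (a ^ (q - 1) - g ^ (q - 1)) := by ring
    rw [abs_sub_comm]
    rw [e1] at this
    exact this

/-- Scalar Young-type inequality behind the boundary estimate
`F(f, U^q/q, U, 1) ≤ F₁ + F₂` of the DG(p)-method: for even `q ≥ 2`,
interior trace `a = U⁺` and boundary datum `g = g_D`,
`3 |a − g| |g|^(q−1)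
   ≤ (a − g)(a^(q−1) − g^(q−1)) + (q−1) q^(−q/(q−1)) 3^(q/(q−1)) 2^((q−2)/(q−1)) g^q`. -/
theorem boundary_young_inequality (q : ℕ) (hq : 2 ≤ q) (hqe : Even q) (a g : ℝ) :
    3 * |a - g| * |g| ^ (q - 1) ≤
      (a - g) * (a ^ (q - 1) - g ^ (q - 1)) +
        ((q : ℝ) - 1) * (q : ℝ) ^ (-(q : ℝ) / ((q : ℝ) - 1)) *
          (3 : ℝ) ^ ((q : ℝ) / ((q : ℝ) - 1)) *
          (2 : ℝ) ^ (((q : ℝ) - 2) / ((q : ℝ) - 1)) * g ^ q := by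
  have hq1 : 1 ≤ q := le_trans one_le_two hq
  have hr2 : (2 : ℝ) ≤ (q : ℝ) := by exact_mod_cast hq
  set r : ℝ := (q : ℝ) with hr
  have hr1 : 1 < r := by linarith
  have hr0 : 0 < r := by linarith
  have hrm1 : 0 < r - 1 := by linarith
  set s : ℝ := r / (r - 1) with hs
  have hspos : 0 < s := by positivity
  have hpq : r.HolderConjugate s := Real.HolderConjugate.conjExponent hr1
  set x : ℝ := r * (2 : ℝ) ^ ((2 : ℝ) - r) with hx
  have hxpos : 0 < x := by positivity
  set δ : ℝ := x ^ (r⁻¹ : ℝ) with hδ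
  have hδpos : 0 < δ := Real.rpow_pos_of_pos hxpos _
  have hznn : (0 : ℝ) ≤ 3 * |g| ^ (q - 1) := by positivity
  have hY := Real.young_inequality_of_nonneg
      (a := δ * |a - g|) (b := 3 * |g| ^ (q - 1) / δ)
      (mul_nonneg hδpos.le (abs_nonneg _)) (div_nonneg hznn hδpos.le) hpq
  have hL : δ * |a - g| * (3 * |g| ^ (q - 1) / δ) = 3 * |a - g| * |g| ^ (q - 1) := by
    field_simp
  rw [hL] at hY
  -- cast fact
  have hcast : ((q - 2 : ℕ) : ℝ) = r - 2 := by
    push_cast [Nat.cast_sub hq]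
    ring
  -- first term
  have hterm1 : (δ * |a - g|) ^ r / r ≤ (a - g) * (a ^ (q - 1) - g ^ (q - 1)) := by
    rw [Real.mul_rpow hδpos.le (abs_nonneg _), hδ, Real.rpow_inv_rpow hxpos.le hr0.ne']
    have habs := aux_abs hq hqe a g
    have hRabs : |a - g| ^ (r : ℝ) = |a - g| ^ (q : ℕ) := by
      rw [hr, Real.rpow_natCast]
    rw [hRabs, hx]
    have hone : (2 : ℝ) ^ ((2 : ℝ) - r) * (2 : ℝ) ^ (q - 2 : ℕ) = 1 := by
      rw [← Real.rpow_natCast 2 (q - 2), ← Real.rpow_add two_pos, hcast]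
      norm_num
    have h2pos : (0 : ℝ) < (2 : ℝ) ^ ((2 : ℝ) - r) := Real.rpow_pos_of_pos two_pos _
    calc r * (2 : ℝ) ^ ((2 : ℝ) - r) * |a - g| ^ (q : ℕ) / r
        = (2 : ℝ) ^ ((2 : ℝ) - r) * |a - g| ^ (q : ℕ) := by
          field_simp
      _ ≤ (2 : ℝ) ^ ((2 : ℝ) - r) *
            (2 ^ (q - 2 : ℕ) * ((a - g) * (a ^ (q - 1) - g ^ (q - 1)))) := by
          exact mul_le_mul_of_nonneg_left habs h2pos.le
      _ = ((2 : ℝ) ^ ((2 : ℝ) - r) * (2 : ℝ) ^ (q - 2 : ℕ)) *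
            ((a - g) * (a ^ (q - 1) - g ^ (q - 1))) := by ring
      _ = (a - g) * (a ^ (q - 1) - g ^ (q - 1)) := by rw [hone, one_mul]
  -- second term
  set u : ℝ := (r - 1)⁻¹ with hu
  have hterm2 : (3 * |g| ^ (q - 1) / δ) ^ s / s =
      (r - 1) * r ^ (-r / (r - 1)) * (3 : ℝ) ^ s *
        (2 : ℝ) ^ ((r - 2) / (r - 1)) * g ^ q := by
    have hδs : δ ^ s = r ^ u * (2 : ℝ) ^ (((2 : ℝ) - r) * u) := by
      rw [hδ, ← Real.rpow_mul hxpos.le]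
      have h1 : r⁻¹ * s = u := by
        rw [hs, hu]; field_simp
      rw [h1, hx, Real.mul_rpow hr0.le (by positivity), ← Real.rpow_mul (by norm_num)]
    have hgq : (|g| ^ (q - 1 : ℕ)) ^ s = g ^ q := by
      rw [← Real.rpow_natCast |g| (q - 1), ← Real.rpow_mul (abs_nonneg g)]
      have hc1 : ((q - 1 : ℕ) : ℝ) = r - 1 := by
        push_cast [Nat.cast_sub hq1]; ring
      have h2 : ((q - 1 : ℕ) : ℝ) * s = r := by
        rw [hc1, hs]; field_simp
      rw [h2, hr, Real.rpow_natCast, hqe.pow_abs]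
    rw [Real.div_rpow hznn hδpos.le, Real.mul_rpow (by norm_num) (by positivity), hgq, hδs]
    have h2u : (2 : ℝ) ^ (((2 : ℝ) - r) * u) = ((2 : ℝ) ^ ((r - 2) * u))⁻¹ := by
      rw [← Real.rpow_neg (by norm_num)]
      ring_nf
    have hru : r ^ (-r / (r - 1)) = (r * r ^ u)⁻¹ := by
      have h3 : r * r ^ u = r ^ (1 + u) := by
        rw [Real.rpow_add hr0, Real.rpow_one]
      rw [h3, ← Real.rpow_neg hr0.le]
      congr 1
      rw [hu]; field_simp; ring
    have e1 : (r - 2) / (r - 1) = (r - 2) * u := by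
      rw [hu]; ring
    rw [h2u, hru, e1, hs]
    have p1 : (0 : ℝ) < r ^ u := Real.rpow_pos_of_pos hr0 _
    have p2 : (0 : ℝ) < (2 : ℝ) ^ ((r - 2) * u) := Real.rpow_pos_of_pos two_pos _
    field_simp
  linarith [hY, hterm1, hterm2]
end
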